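/- (Cayley's identity.) Let n ≥ 1, let X = (x_{ij}) be the generic n×n matrix over ℂ[x_{ij} : 1 ≤ i,j ≤ n], and let det(∂) = det((∂/∂x_{ij})_{i,j}) be the differential operator obtained by replacing each variable x_{ij} by ∂/∂x_{ij} in the determinant (unambiguous since partial derivatives commute). Then for every integer α ≥ 1: det(∂)( (det X)^α ) = α(α+1)⋯(α+n−1) · (det X)^{α−1}. -/

import Mathlib

open MvPolynomial

theorem pderiv_comm' {σ : Type*} {R : Type*} [CommSemiring R] (i j : σ) (f : MvPolynomial σ R) :
    pderiv i (pderiv j f) = pderiv j (pderiv i f) := by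
  have h1 : ∀ a b c : σ, pderiv a ((pderiv b) (X c : MvPolynomial σ R)) = 0 := by
    intro a b c
    rcases eq_or_ne c b with rfl | h
    · simp [pderiv_X_self]
    · simp [pderiv_X_of_ne h]
  induction f using MvPolynomial.induction_on with
  | C a => simp
  | add f g hf hg => simp [hf, hg]
  | mul_X f k hf => simp only [pderiv_mul, map_add, hf, h1]; ring

theorem pderiv_commute {σ : Type*} (a b : σ) :
    Commute ((pderiv a).toLinearMap : Module.End ℂ (MvPolynomial σ ℂ))
      ((pderiv b).toLinearMap) := by
  apply LinearMap.ext
  intro f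
  exact pderiv_comm' a b f

/-- The differential operator corresponding to the monomial `m`:
the composition of the partial derivatives `∂/∂xᵢ`, each taken `m i` times. -/
noncomputable def monOp {σ : Type*} (m : σ →₀ ℕ) : Module.End ℂ (MvPolynomial σ ℂ) :=
  m.support.noncommProd
    (fun i => ((pderiv i).toLinearMap : Module.End ℂ (MvPolynomial σ ℂ)) ^ (m i))
    (fun a _ b _ _ => (pderiv_commute a b).pow_pow _ _)

/-- The differential operator obtained from a polynomial `p` by substituting the
(commuting) partial derivative `∂/∂xᵢ` for each variable `xᵢ`, applied to `f`. -/
noncomputable def diffOp {σ : Type*} (p f : MvPolynomial σ ℂ) : MvPolynomial σ ℂ :=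
  ∑ m ∈ p.support, p.coeff m • monOp m f

namespace CayleyAux

open Equiv Finset

variable {n : ℕ}

noncomputable abbrev RR (n : ℕ) := MvPolynomial (Fin n × Fin n) ℂ

noncomputable def Xp (n : ℕ) : Matrix (Fin n) (Fin n) (RR n) :=
  Matrix.of fun i j => X (i, j)

noncomputable def Dl (n : ℕ) : RR n := (Xp n).det

noncomputable def Yl (n : ℕ) : Matrix (Fin n) (Fin n) (RR n) := (Xp n).adjugate

/-- Leibniz rule for `pderiv` over a finite product. -/
lemma pderiv_finset_prod {τ : Type*} [DecidableEq τ] (v : Fin n × Fin n) (s : Finset τ)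
    (f : τ → RR n) :
    pderiv v (∏ i ∈ s, f i) = ∑ i ∈ s, pderiv v (f i) * ∏ j ∈ s.erase i, f j := by
  induction s using Finset.induction_on with
  | empty => simp
  | @insert a s ha ih =>
    rw [Finset.prod_insert ha, pderiv_mul, ih, Finset.sum_insert ha,
      Finset.erase_insert ha, Finset.mul_sum]
    have : ∀ i ∈ s, f a * (pderiv v (f i) * ∏ j ∈ s.erase i, f j)
        = pderiv v (f i) * ∏ j ∈ (insert a s).erase i, f j := by
      intro i hi
      rw [Finset.erase_insert_of_ne (by rintro rfl; exact ha hi),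
        Finset.prod_insert (fun h => ha (Finset.mem_of_mem_erase h))]
      ring
    rw [Finset.sum_congr rfl this]

lemma pderiv_finset_prod_eq_zero {τ : Type*} [DecidableEq τ] (v : Fin n × Fin n) (s : Finset τ)
    (f : τ → RR n) (h : ∀ i ∈ s, pderiv v (f i) = 0) :
    pderiv v (∏ i ∈ s, f i) = 0 := by
  rw [pderiv_finset_prod]
  exact Finset.sum_eq_zero fun i hi => by rw [h i hi, zero_mul]

lemma mul_pderiv_pow (v : Fin n × Fin n) (p : RR n) (m : ℕ) :
    p * pderiv v (p ^ m) = m • (p ^ m * pderiv v p) := by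
  cases m with
  | zero => simp
  | succ m =>
    rw [Derivation.leibniz_pow, Nat.add_sub_cancel]
    simp only [smul_eq_mul, nsmul_eq_mul]
    push_cast
    ring

/-- Entries of the adjugate in column `a` do not involve the variables of row `a`. -/
lemma pderiv_adjugate_same (a b k : Fin n) : pderiv (a, b) (Yl n k a) = 0 := by
  rw [Yl, Matrix.adjugate_apply, Matrix.det_apply, map_sum]
  refine Finset.sum_eq_zero fun σ _ => ?_
  rw [Units.smul_def, map_zsmul]
  rw [pderiv_finset_prod_eq_zero, smul_zero]
  intro i _
  rcases eq_or_ne (σ i) a with h | h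
  · rw [h, Matrix.updateRow_self]
    rcases eq_or_ne i k with h2 | h2
    · rw [h2, Pi.single_eq_same]; simp
    · rw [Pi.single_eq_of_ne h2]; simp
  · rw [Matrix.updateRow_ne h]
    exact pderiv_X_of_ne (by simp [Xp, h])

/-- Jacobi's formula: the derivative of the determinant is the adjugate. -/
lemma pderiv_det (a b : Fin n) : pderiv (a, b) (Dl n) = Yl n b a := by
  have h : Dl n = ∑ k, Xp n a k * Yl n k a := by
    have := congrFun (congrFun (Matrix.mul_adjugate (Xp n)) a) a
    rw [Matrix.mul_apply] at this
    rw [Dl, Yl, this, Matrix.smul_apply, Matrix.one_apply_eq, smul_eq_mul, mul_one]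
  rw [h, map_sum]
  have : ∀ k : Fin n, pderiv (a, b) (Xp n a k * Yl n k a)
      = (if k = b then Yl n k a else 0) := by
    intro k
    rw [pderiv_mul, pderiv_adjugate_same, mul_zero, add_zero]
    rcases eq_or_ne k b with rfl | h2
    · rw [if_pos rfl, Xp]
      simp [pderiv_X_self]
    · rw [if_neg h2, Xp]
      rw [Matrix.of_apply, pderiv_X_of_ne (by simp [h2]), zero_mul]
  rw [Finset.sum_congr rfl fun k _ => this k, Finset.sum_ite_eq' Finset.univ b _]
  simp

lemma sum_X_mul_pderiv_adjugate (a b m l : Fin n) :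
    ∑ p, Xp n m p * pderiv (a, b) (Yl n p l)
      = (if m = l then Yl n b a else 0) - (if m = a then Yl n b l else 0) := by
  have h1 : (Xp n * Yl n) m l = if m = l then Dl n else 0 := by
    rw [Yl, Matrix.mul_adjugate, Matrix.smul_apply, Matrix.one_apply, Dl]
    split <;> simp
  have h2 : pderiv (a, b) ((Xp n * Yl n) m l)
      = (if m = a then Yl n b l else 0) + ∑ p, Xp n m p * pderiv (a, b) (Yl n p l) := by
    rw [Matrix.mul_apply, map_sum]
    have : ∀ p : Fin n, pderiv (a, b) (Xp n m p * Yl n p l)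
        = (if m = a ∧ p = b then Yl n p l else 0) + Xp n m p * pderiv (a, b) (Yl n p l) := by
      intro p
      rw [pderiv_mul]
      congr 1
      rcases eq_or_ne (m, p) (a, b) with h | h
      · rw [Xp, Matrix.of_apply, h, pderiv_X_self, one_mul,
          if_pos ⟨congrArg Prod.fst h, congrArg Prod.snd h⟩]
      · rw [Xp, Matrix.of_apply, pderiv_X_of_ne h, zero_mul,
          if_neg (by rintro ⟨rfl, rfl⟩; exact h rfl)]
    rw [Finset.sum_congr rfl fun p _ => this p, Finset.sum_add_distrib]
    congr 1
    simp [Finset.sum_ite_eq' Finset.univ b, ite_and]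
  have h3 : pderiv (a, b) ((Xp n * Yl n) m l) = if m = l then Yl n b a else 0 := by
    rw [h1]
    split
    · exact pderiv_det a b
    · simp
  rw [h3] at h2
  linear_combination -h2

/-- Derivative of adjugate entries, multiplied by the determinant. -/
lemma det_mul_pderiv_adjugate (a b k l : Fin n) :
    Dl n * pderiv (a, b) (Yl n k l)
      = Yl n k l * Yl n b a - Yl n k a * Yl n b l := by
  have h0 : ∀ p : Fin n, (Yl n * Xp n) k p = if k = p then Dl n else 0 := by
    intro p
    rw [Yl, Matrix.adjugate_mul, Matrix.smul_apply, Matrix.one_apply, Dl]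
    split <;> simp
  have key : ∑ p, (if k = p then Dl n else 0) * pderiv (a, b) (Yl n p l)
      = Dl n * pderiv (a, b) (Yl n k l) := by
    simp [ite_mul]
  calc Dl n * pderiv (a, b) (Yl n k l)
      = ∑ p, (if k = p then Dl n else 0) * pderiv (a, b) (Yl n p l) := key.symm
    _ = ∑ p, (Yl n * Xp n) k p * pderiv (a, b) (Yl n p l) := by
        refine Finset.sum_congr rfl fun p _ => by rw [h0]
    _ = ∑ m, Yl n k m * ∑ p, Xp n m p * pderiv (a, b) (Yl n p l) := by
        simp only [Matrix.mul_apply, Finset.sum_mul, Finset.mul_sum]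
        rw [Finset.sum_comm]
        exact Finset.sum_congr rfl fun m _ => Finset.sum_congr rfl fun p _ => by ring
    _ = ∑ m, Yl n k m * ((if m = l then Yl n b a else 0) - (if m = a then Yl n b l else 0)) := by
        refine Finset.sum_congr rfl fun m _ => by rw [sum_X_mul_pderiv_adjugate]
    _ = Yl n k l * Yl n b a - Yl n k a * Yl n b l := by
        simp only [mul_sub, mul_ite, mul_zero, Finset.sum_sub_distrib,
          Finset.sum_ite_eq' Finset.univ, Finset.mem_univ, if_pos]

/-- The permutations of `Fin n` supported inside `S`. -/
def Hs (n : ℕ) (S : Finset (Fin n)) : Finset (Equiv.Perm (Fin n)) :=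
  Finset.univ.filter fun u => ∀ i ∉ S, u i = i

lemma mem_Hs {S : Finset (Fin n)} {u : Equiv.Perm (Fin n)} :
    u ∈ Hs n S ↔ ∀ i ∉ S, u i = i := by simp [Hs]

lemma Hs_apply_mem {S : Finset (Fin n)} {u : Equiv.Perm (Fin n)} (hu : u ∈ Hs n S)
    {i : Fin n} (hi : i ∈ S) : u i ∈ S := by
  by_contra h
  have h2 := mem_Hs.1 hu _ h
  exact h (by rw [u.injective h2]; exact hi)

lemma Hs_fixed {S : Finset (Fin n)} {u : Equiv.Perm (Fin n)} (hu : u ∈ Hs n S)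
    {i : Fin n} (hi : i ∉ S) : u i = i := mem_Hs.1 hu i hi

lemma one_mem_Hs (S : Finset (Fin n)) : (1 : Equiv.Perm (Fin n)) ∈ Hs n S :=
  mem_Hs.2 fun _ _ => rfl

lemma mul_mem_Hs {S : Finset (Fin n)} {u v : Equiv.Perm (Fin n)}
    (hu : u ∈ Hs n S) (hv : v ∈ Hs n S) : u * v ∈ Hs n S :=
  mem_Hs.2 fun i hi => by
    rw [Equiv.Perm.mul_apply, Hs_fixed hv hi, Hs_fixed hu hi]

lemma swap_mem_Hs {S : Finset (Fin n)} {i j : Fin n} (hi : i ∈ S) (hj : j ∈ S) :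
    Equiv.swap i j ∈ Hs n S :=
  mem_Hs.2 fun k hk =>
    Equiv.swap_apply_of_ne_of_ne (by rintro rfl; exact hk hi) (by rintro rfl; exact hk hj)

lemma Hs_mono {S T : Finset (Fin n)} (h : S ⊆ T) : Hs n S ⊆ Hs n T := fun u hu =>
  mem_Hs.2 fun i hi => Hs_fixed hu (fun c => hi (h c))

lemma Hs_empty : Hs n ∅ = {1} := by
  ext u
  simp only [mem_Hs, Finset.mem_singleton]
  constructor
  · intro h
    ext i
    exact congrArg Fin.val (h i (Finset.notMem_empty i))
  · rintro rfl
    exact fun i _ => rfl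

lemma Hs_univ : Hs n Finset.univ = Finset.univ := by
  ext u; simp [mem_Hs]

/-- Reindexing a sum over the permutations supported in `insert i₀ S` by the value at `i₀`. -/
lemma sum_Hs_insert {M : Type*} [AddCommMonoid M] {S : Finset (Fin n)} {i₀ : Fin n}
    (h : i₀ ∉ S) (f : Equiv.Perm (Fin n) → M) :
    ∑ u ∈ Hs n (insert i₀ S), f u
      = ∑ j ∈ insert i₀ S, ∑ u ∈ Hs n S, f (Equiv.swap i₀ j * u) := by
  rw [← Finset.sum_product']
  refine Finset.sum_nbij' (fun u => (u i₀, Equiv.swap i₀ (u i₀) * u))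
    (fun p => Equiv.swap i₀ p.1 * p.2) ?_ ?_ ?_ ?_ ?_
  · intro u hu
    rw [Finset.mem_product]
    refine ⟨Hs_apply_mem hu (Finset.mem_insert_self _ _), mem_Hs.2 fun i hi => ?_⟩
    rcases eq_or_ne i i₀ with rfl | hne
    · simp
    · have hiS : i ∉ insert i₀ S := by
        simp only [Finset.mem_insert, not_or]
        exact ⟨hne, hi⟩
      rw [Equiv.Perm.mul_apply, Hs_fixed hu hiS]
      exact Equiv.swap_apply_of_ne_of_ne hne (by
        rintro rfl
        exact hiS (Hs_apply_mem hu (Finset.mem_insert_self _ _)))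
  · intro p hp
    rw [Finset.mem_product] at hp
    exact mul_mem_Hs (swap_mem_Hs (Finset.mem_insert_self _ _) hp.1)
      (Hs_mono (Finset.subset_insert _ _) hp.2)
  · intro u _
    show Equiv.swap i₀ (u i₀) * (Equiv.swap i₀ (u i₀) * u) = u
    rw [← mul_assoc, Equiv.swap_mul_self, one_mul]
  · intro p hp
    rw [Finset.mem_product] at hp
    have h1 : (Equiv.swap i₀ p.1 * p.2) i₀ = p.1 := by
      rw [Equiv.Perm.mul_apply, Hs_fixed hp.2 h, Equiv.swap_apply_left]
    have h2 : Equiv.swap i₀ ((Equiv.swap i₀ p.1 * p.2) i₀) * (Equiv.swap i₀ p.1 * p.2) = p.2 := by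
      rw [h1, ← mul_assoc, Equiv.swap_mul_self, one_mul]
    show ((Equiv.swap i₀ p.1 * p.2) i₀, Equiv.swap i₀ ((Equiv.swap i₀ p.1 * p.2) i₀)
      * (Equiv.swap i₀ p.1 * p.2)) = p
    rw [h2, h1]
  · intro u _
    show f u = f (Equiv.swap i₀ (u i₀) * (Equiv.swap i₀ (u i₀) * u))
    refine (congrArg f ?_).symm
    rw [← mul_assoc, Equiv.swap_mul_self, one_mul]


/-- Right-translation invariance of sums over `Hs`. -/
lemma sum_Hs_mul_right {M : Type*} [AddCommMonoid M] {S : Finset (Fin n)}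
    {w : Equiv.Perm (Fin n)} (hw : w ∈ Hs n S) (f : Equiv.Perm (Fin n) → M) :
    ∑ u ∈ Hs n S, f (u * w) = ∑ u ∈ Hs n S, f u := by
  have hwinv : w⁻¹ ∈ Hs n S := mem_Hs.2 fun i hi => by
    have := Hs_fixed hw hi
    conv_lhs => rw [← this]
    exact w.symm_apply_apply i
  refine Finset.sum_nbij' (fun u => u * w) (fun u => u * w⁻¹) ?_ ?_ ?_ ?_ ?_
  · exact fun u hu => mul_mem_Hs hu hw
  · exact fun u hu => mul_mem_Hs hu hwinv
  · intro u _; show u * w * w⁻¹ = u; rw [mul_assoc, mul_inv_cancel, mul_one]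
  · intro u _; show u * w⁻¹ * w = u; rw [mul_assoc, inv_mul_cancel, mul_one]
  · intro u _; rfl

/-- The composition of the partial derivative operators `∂/∂x_{γ(i), i}` over `i ∈ S`. -/
noncomputable def opProd (S : Finset (Fin n)) (γ : Equiv.Perm (Fin n)) :
    Module.End ℂ (RR n) :=
  S.noncommProd (fun i => ((pderiv ((γ i, i) : Fin n × Fin n)).toLinearMap : Module.End ℂ (RR n)))
    (fun _ _ _ _ _ => pderiv_commute _ _)

lemma opProd_insert {S : Finset (Fin n)} {i₀ : Fin n} (h : i₀ ∉ S) (γ : Equiv.Perm (Fin n)) :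
    opProd (insert i₀ S) γ
      = ((pderiv ((γ i₀, i₀) : Fin n × Fin n)).toLinearMap : Module.End ℂ (RR n)) * opProd S γ :=
  Finset.noncommProd_insert_of_notMem _ _ _ _ h

lemma opProd_empty (γ : Equiv.Perm (Fin n)) : opProd (∅ : Finset (Fin n)) γ = 1 := rfl

/-- `F S σ α` : the signed sum over bijections of `S` of iterated derivatives of `Δ^α`. -/
noncomputable def Fop (S : Finset (Fin n)) (σ : Equiv.Perm (Fin n)) (α : ℕ) : RR n :=
  ∑ u ∈ Hs n S, (Equiv.Perm.sign u : ℤ) • opProd S (σ * u) (Dl n ^ α)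

/-- `G S σ` : the corresponding signed sum of products of adjugate entries. -/
noncomputable def Gm (S : Finset (Fin n)) (σ : Equiv.Perm (Fin n)) : RR n :=
  ∑ u ∈ Hs n S, (Equiv.Perm.sign u : ℤ) • ∏ i ∈ S, Yl n i ((σ * u) i)

lemma Fop_empty (σ : Equiv.Perm (Fin n)) (α : ℕ) : Fop ∅ σ α = Dl n ^ α := by
  rw [Fop, Hs_empty, Finset.sum_singleton, opProd_empty]
  simp

lemma Gm_empty (σ : Equiv.Perm (Fin n)) : Gm ∅ σ = 1 := by
  rw [Gm, Hs_empty, Finset.sum_singleton]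
  simp

lemma Fop_insert {S : Finset (Fin n)} {i₀ : Fin n} (h : i₀ ∉ S) (σ : Equiv.Perm (Fin n))
    (α : ℕ) :
    Fop (insert i₀ S) σ α
      = ∑ j ∈ insert i₀ S, (Equiv.Perm.sign (Equiv.swap i₀ j) : ℤ) •
          pderiv ((σ j, i₀) : Fin n × Fin n) (Fop S (σ * Equiv.swap i₀ j) α) := by
  rw [Fop, sum_Hs_insert h]
  refine Finset.sum_congr rfl fun j hj => ?_
  rw [Fop, map_sum, Finset.smul_sum]
  refine Finset.sum_congr rfl fun u hu => ?_
  have h1 : (σ * (Equiv.swap i₀ j * u)) i₀ = σ j := by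
    simp [Equiv.Perm.mul_apply, Hs_fixed hu h, Equiv.swap_apply_left]
  have h2 : σ * (Equiv.swap i₀ j * u) = σ * Equiv.swap i₀ j * u := by rw [mul_assoc]
  rw [opProd_insert h, Module.End.mul_apply, h1, h2, map_zsmul, smul_smul, map_mul]
  norm_cast

lemma Gm_insert {S : Finset (Fin n)} {i₀ : Fin n} (h : i₀ ∉ S) (σ : Equiv.Perm (Fin n)) :
    Gm (insert i₀ S) σ
      = ∑ j ∈ insert i₀ S, (Equiv.Perm.sign (Equiv.swap i₀ j) : ℤ) •
          (Yl n i₀ (σ j) * Gm S (σ * Equiv.swap i₀ j)) := by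
  rw [Gm, sum_Hs_insert h]
  refine Finset.sum_congr rfl fun j hj => ?_
  rw [Gm, Finset.mul_sum, Finset.smul_sum]
  refine Finset.sum_congr rfl fun u hu => ?_
  have h1 : (σ * (Equiv.swap i₀ j * u)) i₀ = σ j := by
    simp [Equiv.Perm.mul_apply, Hs_fixed hu h, Equiv.swap_apply_left]
  have h2 : ∀ i, (σ * (Equiv.swap i₀ j * u)) i = (σ * Equiv.swap i₀ j * u) i := by
    intro i; rw [mul_assoc]
  rw [Finset.prod_insert h, h1, Finset.prod_congr rfl fun i _ => congrArg (Yl n i) (h2 i),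
    mul_smul_comm, smul_smul, map_mul]
  norm_cast



/-- The auxiliary "cross-term" polynomial appearing when differentiating `Gm`. -/
noncomputable def Hq (S : Finset (Fin n)) (τ : Equiv.Perm (Fin n)) (m i₀ : Fin n) : RR n :=
  ∑ u ∈ Hs n S, (Equiv.Perm.sign u : ℤ) •
    ∑ i' ∈ S, Yl n i' m * Yl n i₀ ((τ * u) i') * ∏ i ∈ S.erase i', Yl n i ((τ * u) i)

lemma det_mul_pderiv_Gm (S : Finset (Fin n)) (τ : Equiv.Perm (Fin n)) (m i₀ : Fin n) :
    Dl n * pderiv ((m, i₀) : Fin n × Fin n) (Gm S τ)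
      = (S.card : RR n) * (Yl n i₀ m * Gm S τ) - Hq S τ m i₀ := by
  have core : ∀ u : Equiv.Perm (Fin n),
      Dl n * pderiv ((m, i₀) : Fin n × Fin n) (∏ i ∈ S, Yl n i ((τ * u) i))
        = (S.card : RR n) * (Yl n i₀ m * ∏ i ∈ S, Yl n i ((τ * u) i))
          - ∑ i' ∈ S, Yl n i' m * Yl n i₀ ((τ * u) i')
              * ∏ i ∈ S.erase i', Yl n i ((τ * u) i) := by
    intro u
    calc Dl n * pderiv ((m, i₀) : Fin n × Fin n) (∏ i ∈ S, Yl n i ((τ * u) i))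
        = ∑ i' ∈ S, (Yl n i' ((τ * u) i') * Yl n i₀ m - Yl n i' m * Yl n i₀ ((τ * u) i'))
            * ∏ i ∈ S.erase i', Yl n i ((τ * u) i) := by
          rw [pderiv_finset_prod, Finset.mul_sum]
          exact Finset.sum_congr rfl fun i' _ => by
            rw [← mul_assoc, det_mul_pderiv_adjugate]
      _ = (∑ i' ∈ S, Yl n i₀ m * (Yl n i' ((τ * u) i')
              * ∏ i ∈ S.erase i', Yl n i ((τ * u) i)))
          - ∑ i' ∈ S, Yl n i' m * Yl n i₀ ((τ * u) i')
              * ∏ i ∈ S.erase i', Yl n i ((τ * u) i) := by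
          simp only [sub_mul]
          rw [Finset.sum_sub_distrib]
          rw [sub_left_inj]
          exact Finset.sum_congr rfl fun i' _ => by ring
      _ = _ := by
          rw [sub_left_inj]
          have : ∀ i' ∈ S, Yl n i₀ m * (Yl n i' ((τ * u) i')
              * ∏ i ∈ S.erase i', Yl n i ((τ * u) i))
              = Yl n i₀ m * ∏ i ∈ S, Yl n i ((τ * u) i) := fun i' hi' => by
            rw [Finset.mul_prod_erase S (fun i => Yl n i ((τ * u) i)) hi']
          rw [Finset.sum_congr rfl this, Finset.sum_const, nsmul_eq_mul]
  rw [Gm, Hq, map_sum, Finset.mul_sum, Finset.mul_sum, Finset.mul_sum, ← Finset.sum_sub_distrib]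
  refine Finset.sum_congr rfl fun u hu => ?_
  rw [map_zsmul]
  simp only [zsmul_eq_mul]
  linear_combination ((Equiv.Perm.sign u : ℤ) : RR n) * core u

lemma claimC {S : Finset (Fin n)} {i₀ : Fin n} (h : i₀ ∉ S) (σ : Equiv.Perm (Fin n)) :
    ∑ j ∈ insert i₀ S, ((Equiv.Perm.sign (Equiv.swap i₀ j) : ℤ) : RR n)
        * Hq S (σ * Equiv.swap i₀ j) (σ j) i₀
      = -((S.card : RR n) * Gm (insert i₀ S) σ) := by
  have perI : ∀ i' ∈ S,
      ∑ j ∈ insert i₀ S, ((Equiv.Perm.sign (Equiv.swap i₀ j) : ℤ) : RR n)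
          * ∑ u ∈ Hs n S, ((Equiv.Perm.sign u : ℤ) : RR n)
            * (Yl n i' (σ j) * Yl n i₀ ((σ * Equiv.swap i₀ j * u) i')
              * ∏ i ∈ S.erase i', Yl n i ((σ * Equiv.swap i₀ j * u) i))
        = -Gm (insert i₀ S) σ := by
    intro i' hi'
    have hi'₀ : i' ≠ i₀ := by rintro rfl; exact h hi'
    have hw : Equiv.swap i₀ i' ∈ Hs n (insert i₀ S) :=
      swap_mem_Hs (Finset.mem_insert_self _ _) (Finset.mem_insert_of_mem hi')
    have step1 : Gm (insert i₀ S) σ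
        = ∑ v ∈ Hs n (insert i₀ S), (Equiv.Perm.sign (v * Equiv.swap i₀ i') : ℤ)
            • ∏ i ∈ insert i₀ S, Yl n i ((σ * (v * Equiv.swap i₀ i')) i) := by
      rw [Gm]
      exact (sum_Hs_mul_right hw (fun v => (Equiv.Perm.sign v : ℤ)
        • ∏ i ∈ insert i₀ S, Yl n i ((σ * v) i))).symm
    rw [step1, sum_Hs_insert h]
    rw [← Finset.sum_neg_distrib]
    refine Finset.sum_congr rfl fun j hj => ?_
    rw [Finset.mul_sum, ← Finset.sum_neg_distrib]
    refine Finset.sum_congr rfl fun u hu => ?_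
    -- index computations
    have hu₀ : u i₀ = i₀ := Hs_fixed hu h
    have e₀ : (σ * (Equiv.swap i₀ j * u * Equiv.swap i₀ i')) i₀
        = (σ * Equiv.swap i₀ j * u) i' := by
      simp [Equiv.Perm.mul_apply, Equiv.swap_apply_left]
    have e₁ : (σ * (Equiv.swap i₀ j * u * Equiv.swap i₀ i')) i' = σ j := by
      simp [Equiv.Perm.mul_apply, Equiv.swap_apply_right, hu₀, Equiv.swap_apply_left]
    have e₂ : ∀ i ∈ (S.erase i'),
        (σ * (Equiv.swap i₀ j * u * Equiv.swap i₀ i')) i = (σ * Equiv.swap i₀ j * u) i := by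
      intro i hi
      have h1 : i ≠ i₀ := by rintro rfl; exact h (Finset.mem_of_mem_erase hi)
      have h2 : i ≠ i' := Finset.ne_of_mem_erase hi
      simp [Equiv.Perm.mul_apply, Equiv.swap_apply_of_ne_of_ne h1 h2]
    -- expand the product over insert i₀ S
    have hsplit : ∏ i ∈ insert i₀ S, Yl n i ((σ * (Equiv.swap i₀ j * u * Equiv.swap i₀ i')) i)
        = Yl n i₀ ((σ * Equiv.swap i₀ j * u) i') * (Yl n i' (σ j)
            * ∏ i ∈ S.erase i', Yl n i ((σ * Equiv.swap i₀ j * u) i)) := by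
      rw [Finset.prod_insert h, e₀]
      congr 1
      rw [← Finset.mul_prod_erase S
        (fun i => Yl n i ((σ * (Equiv.swap i₀ j * u * Equiv.swap i₀ i')) i)) hi', e₁]
      congr 1
      exact Finset.prod_congr rfl fun i hi => congrArg (Yl n i) (e₂ i hi)
    -- signs
    have hsign : (Equiv.Perm.sign (Equiv.swap i₀ j * u * Equiv.swap i₀ i') : ℤ)
        = -((Equiv.Perm.sign (Equiv.swap i₀ j) : ℤ) * (Equiv.Perm.sign u : ℤ)) := by
      rw [map_mul, map_mul, Equiv.Perm.sign_swap (Ne.symm hi'₀)]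
      push_cast
      ring
    rw [hsplit, hsign, zsmul_eq_mul]
    push_cast
    ring
  -- now sum over i'
  have expand : ∀ j : Fin n,
      Hq S (σ * Equiv.swap i₀ j) (σ j) i₀
        = ∑ i' ∈ S, ∑ u ∈ Hs n S, ((Equiv.Perm.sign u : ℤ) : RR n)
            * (Yl n i' (σ j) * Yl n i₀ ((σ * Equiv.swap i₀ j * u) i')
              * ∏ i ∈ S.erase i', Yl n i ((σ * Equiv.swap i₀ j * u) i)) := by
    intro j
    rw [Hq]
    simp only [zsmul_eq_mul, Finset.mul_sum]
    rw [Finset.sum_comm]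
  calc ∑ j ∈ insert i₀ S, ((Equiv.Perm.sign (Equiv.swap i₀ j) : ℤ) : RR n)
          * Hq S (σ * Equiv.swap i₀ j) (σ j) i₀
      = ∑ i' ∈ S, ∑ j ∈ insert i₀ S, ((Equiv.Perm.sign (Equiv.swap i₀ j) : ℤ) : RR n)
          * ∑ u ∈ Hs n S, ((Equiv.Perm.sign u : ℤ) : RR n)
            * (Yl n i' (σ j) * Yl n i₀ ((σ * Equiv.swap i₀ j * u) i')
              * ∏ i ∈ S.erase i', Yl n i ((σ * Equiv.swap i₀ j * u) i)) := by
        rw [Finset.sum_congr rfl fun j _ => by rw [expand j, Finset.mul_sum]]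
        exact Finset.sum_comm
    _ = ∑ i' ∈ S, -Gm (insert i₀ S) σ := Finset.sum_congr rfl perI
    _ = -((S.card : RR n) * Gm (insert i₀ S) σ) := by
        rw [Finset.sum_const, nsmul_eq_mul]
        ring

theorem main_claim (α : ℕ) (S : Finset (Fin n)) :
    ∀ σ : Equiv.Perm (Fin n),
      Dl n ^ S.card * Fop S σ α
        = ((∏ l ∈ Finset.range S.card, (α + l) : ℕ) : RR n) * (Dl n ^ α * Gm S σ) := by
  induction S using Finset.induction_on with
  | empty =>
    intro σ
    simp [Fop_empty, Gm_empty]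
  | @insert i₀ S h ih =>
    intro σ
    have hcard : (insert i₀ S).card = S.card + 1 := Finset.card_insert_of_notMem h
    have key : ∀ j : Fin n,
        Dl n ^ (S.card + 1) * pderiv ((σ j, i₀) : Fin n × Fin n)
            (Fop S (σ * Equiv.swap i₀ j) α)
          = ((∏ l ∈ Finset.range S.card, (α + l) : ℕ) : RR n) * (Dl n ^ α
              * ((α : RR n) * (Yl n i₀ (σ j) * Gm S (σ * Equiv.swap i₀ j))
                - Hq S (σ * Equiv.swap i₀ j) (σ j) i₀)) := by
      intro j
      have e1 := ih (σ * Equiv.swap i₀ j)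
      have e2 := congrArg (pderiv ((σ j, i₀) : Fin n × Fin n)) e1
      have hc : pderiv ((σ j, i₀) : Fin n × Fin n)
          (((∏ l ∈ Finset.range S.card, (α + l) : ℕ) : RR n)) = 0 := by
        rw [← map_natCast (MvPolynomial.C : ℂ →+* RR n)]
        exact pderiv_C
      rw [pderiv_mul, pderiv_mul, pderiv_mul, hc, zero_mul, zero_add] at e2
      have e3 := mul_pderiv_pow ((σ j, i₀) : Fin n × Fin n) (Dl n) S.card
      rw [pderiv_det, nsmul_eq_mul] at e3
      have e4 := mul_pderiv_pow ((σ j, i₀) : Fin n × Fin n) (Dl n) α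
      rw [pderiv_det, nsmul_eq_mul] at e4
      have e6 := det_mul_pderiv_Gm S (σ * Equiv.swap i₀ j) (σ j) i₀
      linear_combination (Dl n) * e2 - Fop S (σ * Equiv.swap i₀ j) α * e3
        + ((∏ l ∈ Finset.range S.card, (α + l) : ℕ) : RR n)
            * Gm S (σ * Equiv.swap i₀ j) * e4
        + ((∏ l ∈ Finset.range S.card, (α + l) : ℕ) : RR n) * Dl n ^ α * e6
        - (S.card : RR n) * Yl n i₀ (σ j) * e1
    have hA : ∑ j ∈ insert i₀ S, ((Equiv.Perm.sign (Equiv.swap i₀ j) : ℤ) : RR n)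
        * (Yl n i₀ (σ j) * Gm S (σ * Equiv.swap i₀ j)) = Gm (insert i₀ S) σ := by
      have := (Gm_insert h σ).symm
      simpa only [zsmul_eq_mul] using this
    have hC := claimC h σ
    have hprod : ((∏ l ∈ Finset.range (S.card + 1), (α + l) : ℕ) : RR n)
        = ((∏ l ∈ Finset.range S.card, (α + l) : ℕ) : RR n)
            * ((α : RR n) + (S.card : RR n)) := by
      rw [Finset.prod_range_succ]
      push_cast
      ring
    calc Dl n ^ (insert i₀ S).card * Fop (insert i₀ S) σ α
        = ∑ j ∈ insert i₀ S, ((Equiv.Perm.sign (Equiv.swap i₀ j) : ℤ) : RR n)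
            * (Dl n ^ (S.card + 1) * pderiv ((σ j, i₀) : Fin n × Fin n)
                (Fop S (σ * Equiv.swap i₀ j) α)) := by
          rw [hcard, Fop_insert h σ α, Finset.mul_sum]
          exact Finset.sum_congr rfl fun j _ => by
            rw [zsmul_eq_mul]; ring
      _ = ∑ j ∈ insert i₀ S, (((∏ l ∈ Finset.range S.card, (α + l) : ℕ) : RR n)
            * (((α : RR n) * Dl n ^ α) * (((Equiv.Perm.sign (Equiv.swap i₀ j) : ℤ) : RR n)
                * (Yl n i₀ (σ j) * Gm S (σ * Equiv.swap i₀ j)))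
              - Dl n ^ α * (((Equiv.Perm.sign (Equiv.swap i₀ j) : ℤ) : RR n)
                * Hq S (σ * Equiv.swap i₀ j) (σ j) i₀))) := by
          refine Finset.sum_congr rfl fun j _ => ?_
          rw [key j]; ring
      _ = ((∏ l ∈ Finset.range S.card, (α + l) : ℕ) : RR n)
            * (((α : RR n) * Dl n ^ α)
                * ∑ j ∈ insert i₀ S, (((Equiv.Perm.sign (Equiv.swap i₀ j) : ℤ) : RR n)
                  * (Yl n i₀ (σ j) * Gm S (σ * Equiv.swap i₀ j)))
              - Dl n ^ α * ∑ j ∈ insert i₀ S, (((Equiv.Perm.sign (Equiv.swap i₀ j) : ℤ) : RR n)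
                  * Hq S (σ * Equiv.swap i₀ j) (σ j) i₀)) := by
          rw [← Finset.mul_sum, Finset.sum_sub_distrib, ← Finset.mul_sum, ← Finset.mul_sum]
      _ = ((∏ l ∈ Finset.range ((insert i₀ S).card), (α + l) : ℕ) : RR n)
            * (Dl n ^ α * Gm (insert i₀ S) σ) := by
          rw [hA, hC, hcard, hprod]
          ring

/-! ### The bridge to `diffOp` and the endgame -/

/-- The exponent (multidegree) of the monomial of `det X` attached to `σ`. -/
noncomputable def mexp (σ : Equiv.Perm (Fin n)) : (Fin n × Fin n) →₀ ℕ :=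
  ∑ i : Fin n, Finsupp.single ((σ i, i) : Fin n × Fin n) 1

lemma mexp_apply (σ : Equiv.Perm (Fin n)) (a b : Fin n) :
    mexp σ (a, b) = if σ b = a then 1 else 0 := by
  classical
  rw [mexp, Finsupp.finset_sum_apply]
  have : ∀ i : Fin n, Finsupp.single ((σ i, i) : Fin n × Fin n) 1 ((a, b) : Fin n × Fin n)
      = if i = b then (if σ b = a then 1 else 0) else 0 := by
    intro i
    rw [Finsupp.single_apply]
    by_cases hib : i = b
    · subst hib
      by_cases hsa : σ i = a
      · simp [hsa]
      · simp [hsa, Prod.ext_iff]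
    · simp [hib, Prod.ext_iff]
  rw [Finset.sum_congr rfl fun i _ => this i, Finset.sum_ite_eq' Finset.univ b]
  simp

lemma mexp_injective : Function.Injective (mexp (n := n)) := by
  intro σ τ hst
  ext b
  have := DFunLike.congr_fun hst ((τ b, b) : Fin n × Fin n)
  simp only [mexp_apply, if_pos rfl] at this
  have h : σ b = τ b := by
    by_contra hne
    rw [if_neg hne] at this
    simp at this
  exact congrArg Fin.val h

lemma prod_X_eq_monomial (σ : Equiv.Perm (Fin n)) :
    (∏ i : Fin n, (X ((σ i, i) : Fin n × Fin n) : RR n)) = monomial (mexp σ) 1 := by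
  classical
  rw [mexp]
  induction (Finset.univ : Finset (Fin n)) using Finset.induction_on with
  | empty => simp
  | @insert a s ha ih =>
    rw [Finset.prod_insert ha, Finset.sum_insert ha, ih, X, monomial_mul, one_mul]

lemma det_eq_sum_monomial :
    Dl n = ∑ σ : Equiv.Perm (Fin n), (Equiv.Perm.sign σ : ℤ) • monomial (mexp σ) (1 : ℂ) := by
  rw [Dl, Matrix.det_apply]
  refine Finset.sum_congr rfl fun σ _ => ?_
  rw [Units.smul_def, ← prod_X_eq_monomial]
  rfl

lemma coeff_det (τ : Equiv.Perm (Fin n)) :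
    (Dl n).coeff (mexp τ) = ((Equiv.Perm.sign τ : ℤ) : ℂ) := by
  classical
  rw [det_eq_sum_monomial, coeff_sum]
  rw [Finset.sum_eq_single τ]
  · rw [coeff_smul, coeff_monomial, if_pos rfl, zsmul_eq_mul, mul_one]
  · intro σ _ hne
    rw [coeff_smul, coeff_monomial, if_neg (fun hc => hne (mexp_injective hc)), smul_zero]
  · intro hc
    exact absurd (Finset.mem_univ τ) hc

lemma sign_cast_ne_zero (τ : Equiv.Perm (Fin n)) : ((Equiv.Perm.sign τ : ℤ) : ℂ) ≠ 0 := by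
  rcases Int.units_eq_one_or (Equiv.Perm.sign τ) with h | h <;> simp [h]

lemma support_det :
    (Dl n).support = Finset.univ.image (mexp (n := n)) := by
  classical
  ext μ
  simp only [MvPolynomial.mem_support_iff, Finset.mem_image, Finset.mem_univ, true_and]
  constructor
  · intro hμ
    by_contra hc
    push_neg at hc
    apply hμ
    rw [det_eq_sum_monomial, coeff_sum]
    refine Finset.sum_eq_zero fun σ _ => ?_
    rw [coeff_smul, coeff_monomial, if_neg (hc σ), smul_zero]
  · rintro ⟨σ, rfl⟩
    rw [coeff_det]
    exact sign_cast_ne_zero σ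

/-- `noncommProd` over the image of an injective map. -/
lemma noncommProd_image {β : Type*} [Monoid β] (s : Finset (Fin n))
    (g : Fin n → Fin n × Fin n) (hg : Function.Injective g)
    (f : Fin n × Fin n → β) (hf : ∀ a b, Commute (f a) (f b)) :
    (s.image g).noncommProd f (fun _ _ _ _ _ => hf _ _)
      = s.noncommProd (f ∘ g) (fun _ _ _ _ _ => hf _ _) := by
  classical
  induction s using Finset.induction_on with
  | empty => simp; rfl
  | @insert a s ha ih =>
    erw [Finset.image_insert,
      Finset.noncommProd_insert_of_notMem _ _ _ _ (by
        rw [Finset.mem_image]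
        rintro ⟨b, hb, hba⟩
        exact ha (hg hba ▸ hb)),
      Finset.noncommProd_insert_of_notMem _ _ _ _ ha, ih]
    rfl

lemma mexp_support (σ : Equiv.Perm (Fin n)) :
    (mexp σ).support = Finset.univ.image (fun i => ((σ i, i) : Fin n × Fin n)) := by
  classical
  ext v
  obtain ⟨a, b⟩ := v
  simp only [Finsupp.mem_support_iff, Finset.mem_image, Finset.mem_univ, true_and,
    mexp_apply]
  constructor
  · intro hv
    have hab : σ b = a := by
      by_contra hab
      rw [if_neg hab] at hv
      exact hv rfl
    exact ⟨b, by rw [hab]⟩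
  · rintro ⟨i, hi⟩
    have h1 : σ i = a := congrArg Prod.fst hi
    have h2 : i = b := congrArg Prod.snd hi
    subst h2
    rw [if_pos h1]
    exact one_ne_zero

lemma monOp_mexp (σ : Equiv.Perm (Fin n)) :
    monOp (mexp σ) = opProd Finset.univ σ := by
  classical
  rw [monOp, opProd]
  refine Eq.trans (Finset.noncommProd_congr (mexp_support σ) (g := fun v =>
    ((pderiv v).toLinearMap : Module.End ℂ (RR n))) ?_ _) ?_
  rotate_left
  · rw [noncommProd_image _ _ (fun i j hij => (Prod.mk.injEq .. ▸ hij).2)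
      _ (fun a b => pderiv_commute a b)]
    exact Finset.noncommProd_congr rfl (fun i _ => rfl) _
  · intro v hv
    rw [Finset.mem_image] at hv
    obtain ⟨i, _, rfl⟩ := hv
    have h1 : mexp σ ((σ i, i) : Fin n × Fin n) = 1 := by rw [mexp_apply, if_pos rfl]
    rw [h1, pow_one]

lemma diffOp_det_eq_Fop (α : ℕ) : diffOp (Dl n) (Dl n ^ α) = Fop Finset.univ 1 α := by
  classical
  rw [diffOp, support_det, Finset.sum_image (fun σ _ τ _ h => mexp_injective h), Fop, Hs_univ]
  refine Finset.sum_congr rfl fun σ _ => ?_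
  rw [coeff_det, monOp_mexp, Int.cast_smul_eq_zsmul, one_mul]

lemma Gm_univ_one : Gm (Finset.univ : Finset (Fin n)) 1 = Dl n ^ (n - 1) := by
  have h1 : Gm (Finset.univ : Finset (Fin n)) 1 = ((Yl n).transpose).det := by
    rw [Gm, Hs_univ, Matrix.det_apply]
    refine Finset.sum_congr rfl fun u _ => ?_
    rw [Units.smul_def, one_mul]
    congr 1
  rw [h1, Matrix.det_transpose, Yl, Matrix.det_adjugate, Fintype.card_fin]
  rfl

lemma det_ne_zero (hn : 1 ≤ n) : Dl n ≠ 0 := by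
  intro hc
  have h0 : (MvPolynomial.eval (fun v : Fin n × Fin n => if v.1 = v.2 then (1 : ℂ) else 0) :
      RR n →+* ℂ) (Dl n) = 1 := by
    rw [Dl, RingHom.map_det, RingHom.mapMatrix_apply]
    have : (Xp n).map (MvPolynomial.eval
        (fun v : Fin n × Fin n => if v.1 = v.2 then (1 : ℂ) else 0))
        = (1 : Matrix (Fin n) (Fin n) ℂ) := by
      ext i j
      rw [Matrix.map_apply, Xp, Matrix.of_apply, MvPolynomial.eval_X, Matrix.one_apply]
    rw [this, Matrix.det_one]
  rw [hc, map_zero] at h0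
  exact zero_ne_one h0

end CayleyAux

/-- Cayley's identity: for the generic `n × n` matrix `X = (x_{ij})` and every
integer `α ≥ 1`, one has `det(∂)((det X)^α) = α(α+1)⋯(α+n−1) ⬝ (det X)^{α−1}`. -/
theorem cayley_identity (n : ℕ) (hn : 1 ≤ n) (α : ℕ) (hα : 1 ≤ α) :
    diffOp (Matrix.det (Matrix.of fun i j : Fin n => (X (i, j) : MvPolynomial (Fin n × Fin n) ℂ)))
        ((Matrix.det (Matrix.of fun i j : Fin n => (X (i, j) : MvPolynomial (Fin n × Fin n) ℂ))) ^ α)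
    = (∏ i ∈ Finset.range n, (α + i)) •
        (Matrix.det (Matrix.of fun i j : Fin n => (X (i, j) : MvPolynomial (Fin n × Fin n) ℂ)))
          ^ (α - 1) := by
  classical
  have hXp : Matrix.det (Matrix.of fun i j : Fin n =>
      (X (i, j) : MvPolynomial (Fin n × Fin n) ℂ)) = CayleyAux.Dl n := rfl
  rw [hXp]
  have hmain := CayleyAux.main_claim α (Finset.univ : Finset (Fin n)) 1
  rw [CayleyAux.diffOp_det_eq_Fop, nsmul_eq_mul]
  have hcard : (Finset.univ : Finset (Fin n)).card = n := by
    rw [Finset.card_univ, Fintype.card_fin]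
  rw [hcard, CayleyAux.Gm_univ_one] at hmain
  have hpow : CayleyAux.Dl n ^ α * CayleyAux.Dl n ^ (n - 1)
      = CayleyAux.Dl n ^ n * CayleyAux.Dl n ^ (α - 1) := by
    rw [← pow_add, ← pow_add]
    congr 1
    omega
  have hne : CayleyAux.Dl n ^ n ≠ 0 := pow_ne_zero _ (CayleyAux.det_ne_zero hn)
  apply mul_left_cancel₀ hne
  rw [hmain, hpow]
  ring
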